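/- Let A be a ring, and suppose M is an A-module with a direct sum decomposition M = ⊕_{i=1}^t M_i such that Ext¹_A(M, M) = 0 and End_A(M) has the property that for all i ≠ j, Hom_A(M_i, M_j) ≠ 0 and Hom_A(M_j, M_i) ≠ 0 implies i = j (no 2-cycles between distinct summands) and more generally there are no Hom-cycles among distinct summands. Then there exists a linear order ≤ on {1,...,t} making ({M_1,...,M_t}, ≤) a stratifying system. -/

import Mathlib

open CategoryTheory Opposite Limits

/-- Transfer `Subsingleton` along a retract in `ModuleCat ℤ`. -/
lemma subsingleton_of_retract {X Y : ModuleCat ℤ} (u : X ⟶ Y) (v : Y ⟶ X)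
    (h : u ≫ v = 𝟙 X) (hY : Subsingleton Y) : Subsingleton X := by
  constructor
  intro a b
  have ha := ConcreteCategory.congr_hom h a
  have hb := ConcreteCategory.congr_hom h b
  rw [CategoryTheory.comp_apply, CategoryTheory.id_apply] at ha hb
  calc a = v (u a) := ha.symm
    _ = v (u b) := by rw [Subsingleton.elim (u a) (u b)]
    _ = b := hb

/-- Let `M = ⊕_{i=1}^t M_i` be a rigid `A`-module (`Ext¹_A(M,M) = 0`) such that
the digraph on `{1,...,t}` with edges `i → j` when `i ≠ j` and `Hom_A(M i, M j) ≠ 0`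
is acyclic. Then there is a linear order `≤` on `{1,...,t}` making
`({M_1,...,M_t}, ≤)` a stratifying system. -/
theorem stratifying_of_rigid_no_hom_cycles (A : Type) [Ring A] (t : ℕ)
    (M : Fin t → ModuleCat A)
    (hrigid : Subsingleton (((Ext ℤ (ModuleCat A) 1).obj (op (⨁ M))).obj (⨁ M)))
    (hacyc : ∀ i : Fin t,
      ¬ Relation.TransGen (fun a b : Fin t => a ≠ b ∧ ∃ f : M a ⟶ M b, f ≠ 0) i i) :
    ∃ r : LinearOrder (Fin t),
      (∀ i j : Fin t, r.lt i j → ∀ f : M j ⟶ M i, f = 0) ∧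
      (∀ i j : Fin t, r.le i j →
        Subsingleton (((Ext ℤ (ModuleCat A) 1).obj (op (M j))).obj (M i))) := by
  classical
  set rel : Fin t → Fin t → Prop :=
    fun a b => a ≠ b ∧ ∃ f : M a ⟶ M b, f ≠ 0 with hrel
  set p : Fin t → Fin t → Prop :=
    fun a b => a = b ∨ Relation.TransGen rel a b with hp
  have hpo : IsPartialOrder (Fin t) p := by
    refine { refl := ?_, trans := ?_, antisymm := ?_ }
    · intro a; exact Or.inl rfl
    · intro a b c hab hbc
      rcases hab with rfl | hab
      · exact hbc
      rcases hbc with rfl | hbc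
      · exact Or.inr hab
      · exact Or.inr (hab.trans hbc)
    · intro a b hab hba
      rcases hab with rfl | hab
      · rfl
      rcases hba with rfl | hba
      · rfl
      · exact absurd (hab.trans hba) (hacyc a)
  obtain ⟨s, hslin, hps⟩ := @extend_partialOrder _ p hpo
  haveI := hslin
  set r' : Fin t → Fin t → Prop := fun a b => s a b ∧ a ≠ b with hr'
  haveI hsto : IsStrictTotalOrder (Fin t) r' := by
    refine { trichotomous := ?_, irrefl := ?_, trans := ?_ }
    · intro a b
      by_cases hab : a = b
      · exact fun _ _ => hab
      · rcases total_of s a b with h | h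
        · exact fun h1 _ => (h1 ⟨h, hab⟩).elim
        · exact fun _ h2 => (h2 ⟨h, fun e => hab e.symm⟩).elim
    · intro a h; exact h.2 rfl
    · intro a b c hab hbc
      refine ⟨_root_.trans hab.1 hbc.1, fun e => ?_⟩
      exact hab.2 (_root_.antisymm hab.1 (e ▸ hbc.1))
  letI : DecidableRel r' := Classical.decRel _
  letI lo : LinearOrder (Fin t) := linearOrderOfSTO r'
  refine ⟨lo, ?_, ?_⟩
  · intro i j hij f
    by_contra hf
    have hij' : s i j ∧ i ≠ j := hij
    have hji : s j i := by
      have : p j i := Or.inr (Relation.TransGen.single ⟨fun e => hij'.2 e.symm, f, hf⟩)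
      exact hps j i this
    exact hij'.2 (_root_.antisymm hij'.1 hji)
  · intro i j _
    set G := Ext ℤ (ModuleCat A) 1 with hG
    refine subsingleton_of_retract
      ((G.map (biproduct.π M j).op).app (M i) ≫
        (G.obj (op (⨁ M))).map (biproduct.ι M i))
      ((G.obj (op (⨁ M))).map (biproduct.π M i) ≫
        (G.map (biproduct.ι M j).op).app (M i)) ?_ hrigid
    rw [Category.assoc, ← Category.assoc ((G.obj (op (⨁ M))).map (biproduct.ι M i)),
      ← Functor.map_comp, biproduct.ι_π_self, CategoryTheory.Functor.map_id, Category.id_comp,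
      ← NatTrans.comp_app, ← Functor.map_comp, ← op_comp, biproduct.ι_π_self,
      op_id, CategoryTheory.Functor.map_id, NatTrans.id_app]
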